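/- arXiv:1611.03103 — 3 statements merged into one kernel-verified Lean document; each statement's English description precedes it below -/
import Mathlib

section
/- Let T ⊆ 𝕊^g be a closed matrix convex set and m ∈ ℕ. Then: (i) kz_m(T) is a matrix convex set with kz_m(T)(i) = T(i) for all i ∈ {1,…,m}, and every matrix convex set S with S(i) = T(i) for i ∈ {1,…,m} satisfies kz_m(T) ⊆ S; (ii) if moreover 0 is an interior point of T(1), then pz_m(T) is a matrix convex set with pz_m(T)(i) = T(i) for all i ∈ {1,…,m}, and every matrix convex set S with S(i) = T(i) for i ∈ {1,…,m} satisfies S ⊆ pz_m(T). -/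
open Matrix Kronecker
open scoped ComplexOrder

noncomputable section

abbrev Tuple (g k : ℕ) := Fin g → Matrix (Fin k) (Fin k) ℂ

def IsHermTuple {g k : ℕ} (A : Tuple g k) : Prop := ∀ i, (A i).IsHermitian

abbrev GradedSet (g : ℕ) := (k : ℕ) → Set (Tuple g k)

/-- A graded subset of the free space is matrix convex if it is nonempty and closed under
matrix convex combinations. -/
def MatConvex {g : ℕ} (S : GradedSet g) : Prop :=
  (∃ k, (S k).Nonempty) ∧
  ∀ (r s : ℕ) (k : Fin r → ℕ) (A : (j : Fin r) → Tuple g (k j))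
    (V : (j : Fin r) → Matrix (Fin (k j)) (Fin s) ℂ),
    (∀ j, A j ∈ S (k j)) → (∑ j, (V j)ᴴ * V j) = 1 →
    (fun i => ∑ j, (V j)ᴴ * A j i * V j) ∈ S s

/-- The matrix convex hull: the intersection of all matrix convex sets containing `T`. -/
def mconv {g : ℕ} (T : GradedSet g) : GradedSet g := fun k =>
  {A | ∀ S : GradedSet g, MatConvex S → (∀ m, T m ⊆ S m) → A ∈ S k}

/-- Evaluation of the monic linear pencil `I - ∑ A_i X_i` at the tuple `X`:
`I ⊗ I - ∑ A_i ⊗ X_i`. -/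
def pencilEval {g δ k : ℕ} (A : Tuple g δ) (X : Tuple g k) :
    Matrix (Fin δ × Fin k) (Fin δ × Fin k) ℂ :=
  1 - ∑ i, A i ⊗ₖ X i

/-- The `k`-th level of the free spectrahedron of the monic linear pencil `I - ∑ A_i X_i`. -/
def specLevel {g δ : ℕ} (A : Tuple g δ) (k : ℕ) : Set (Tuple g k) :=
  {X | IsHermTuple X ∧ (pencilEval A X).PosSemidef}

/-- `pz_m(T)`: the graded set whose `k`-th level consists of the hermitian tuples `B` such
that `V* B V ∈ T(r)` for every isometry `V : ℂ^r → ℂ^k` with `r ≤ m`. -/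
def pzSet {g : ℕ} (T : GradedSet g) (m : ℕ) : GradedSet g := fun k =>
  {B | IsHermTuple B ∧ ∀ r : ℕ, r ≤ m → ∀ V : Matrix (Fin k) (Fin r) ℂ,
    Vᴴ * V = 1 → (fun i => Vᴴ * B i * V) ∈ T r}

/-- `kz_m(T) = mconv(T(1) ∪ ... ∪ T(m))`. -/
def kzSet {g : ℕ} (T : GradedSet g) (m : ℕ) : GradedSet g :=
  mconv (fun k => {A | 1 ≤ k ∧ k ≤ m ∧ A ∈ T k})

/-- `0` is an interior point of `T(1)` (inside `𝕊^g(1) ≅ ℝ^g`). -/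
def ZeroInInterior1 {g : ℕ} (T : GradedSet g) : Prop :=
  ∃ ε : ℝ, 0 < ε ∧ ∀ A : Tuple g 1, IsHermTuple A →
    (∀ i, ‖A i 0 0‖ < ε) → A ∈ T 1

lemma exists_QR {k r : ℕ} (hr : r ≤ k) (U : Matrix (Fin k) (Fin r) ℂ) :
    ∃ (Q : Matrix (Fin k) (Fin r) ℂ) (R : Matrix (Fin r) (Fin r) ℂ),
      Qᴴ * Q = 1 ∧ U = Q * R := by
  classical
  rcases Nat.eq_zero_or_pos k with hk | hk
  · subst hk
    have hr0 : r = 0 := Nat.le_zero.mp hr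
    subst hr0
    refine ⟨0, 0, ?_, ?_⟩ <;> · ext i j; exact i.elim0
  haveI : NeZero k := ⟨hk.ne'⟩
  have hdim : Module.finrank ℂ (EuclideanSpace ℂ (Fin k)) = Fintype.card (Fin k) := by simp
  set f : Fin k → EuclideanSpace ℂ (Fin k) :=
    fun i => WithLp.toLp 2 (fun a => if h : (i : ℕ) < r then U a ⟨i, h⟩ else 0) with hfdef
  haveI : WellFoundedLT (Fin k) := inferInstance
  haveI : LocallyFiniteOrderBot (Fin k) := inferInstance
  set b : OrthonormalBasis (Fin k) ℂ (EuclideanSpace ℂ (Fin k)) :=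
    InnerProductSpace.gramSchmidtOrthonormalBasis (𝕜 := ℂ) (E := EuclideanSpace ℂ (Fin k)) (ι := Fin k) hdim f with hb
  refine ⟨Matrix.of fun a i => (b (Fin.castLE hr i) a : ℂ),
          Matrix.of fun i j => inner ℂ (b (Fin.castLE hr i)) (f (Fin.castLE hr j)), ?_, ?_⟩
  · ext i j
    have horth := orthonormal_iff_ite.mp b.orthonormal (Fin.castLE hr i) (Fin.castLE hr j)
    rw [PiLp.inner_apply] at horth
    simp only [RCLike.inner_apply, Fin.castLE_inj] at horth
    rw [Matrix.mul_apply]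
    simp only [Matrix.conjTranspose_apply, Matrix.of_apply]
    rw [Matrix.one_apply]
    simpa [mul_comm] using horth
  · ext a j
    rw [Matrix.mul_apply]
    simp only [Matrix.of_apply]
    set x := f (Fin.castLE hr j) with hx
    have hexp := b.sum_repr' x
    have hval : x a = U a j := by
      simp [hx, hfdef, j.isLt]
    set c : Fin k → ℂ := fun i => (inner ℂ (b i) x : ℂ) * b i a with hc
    have hzero : ∀ i : Fin k, ¬ ((i : ℕ) < r) → c i = 0 := by
      intro i hi
      have hlt : (Fin.castLE hr j) < i := by
        simp only [Fin.lt_def]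
        exact lt_of_lt_of_le j.isLt (le_of_not_gt hi)
      have h0 : (inner ℂ (b i) x : ℂ) = 0 := by
        rw [hx, hb]
        exact InnerProductSpace.gramSchmidtOrthonormalBasis_inv_triangular hdim f hlt
      show (inner ℂ (b i) x : ℂ) * b i a = 0
      rw [h0, zero_mul]
    have hsum : ∑ i : Fin k, c i = U a j := by
      have h1 := congrArg (fun y : EuclideanSpace ℂ (Fin k) =>
        (inner ℂ (EuclideanSpace.single a (1:ℂ)) y : ℂ)) hexp
      simp only [inner_sum, inner_smul_right, EuclideanSpace.inner_single_left,
        _root_.map_one, one_mul] at h1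
      rw [← hval, ← h1]
    have hres : ∑ i : Fin r, c (Fin.castLE hr i) = ∑ i : Fin k, c i := by
      set cnat : ℕ → ℂ := fun i => if h : i < k then c ⟨i, h⟩ else 0 with hcnat
      have h1 : ∑ i : Fin r, c (Fin.castLE hr i) = ∑ i ∈ Finset.range r, cnat i := by
        rw [← Fin.sum_univ_eq_sum_range cnat r]
        apply Finset.sum_congr rfl
        intro i _
        rw [hcnat]
        simp only [lt_of_lt_of_le i.isLt hr, dif_pos]
        rfl
      have h2 : ∑ i : Fin k, c i = ∑ i ∈ Finset.range k, cnat i := by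
        rw [← Fin.sum_univ_eq_sum_range cnat k]
        apply Finset.sum_congr rfl
        intro i _
        rw [hcnat]
        simp only [i.isLt, dif_pos]
      rw [h1, h2]
      apply Finset.sum_subset (Finset.range_subset_range.2 hr)
      intro x hx hxr
      simp only [Finset.mem_range] at hx hxr
      rw [hcnat]
      simp only [hx, dif_pos]
      exact hzero ⟨x, hx⟩ hxr
    rw [← hsum, ← hres]
    apply Finset.sum_congr rfl
    intro i _
    rw [hc]; ring

lemma tuple_zero_eq {g : ℕ} (A B : Tuple g 0) : A = B := by
  funext i; ext a b; exact a.elim0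

lemma matConvex_mem_zero {g : ℕ} {S : GradedSet g} (hS : MatConvex S) (A : Tuple g 0) :
    A ∈ S 0 := by
  obtain ⟨k, B, hB⟩ := hS.1
  have h := hS.2 1 0 (fun _ => k) (fun _ => B) (fun _ => 0) (fun _ => hB)
    (by ext a b; exact a.elim0)
  rw [tuple_zero_eq A
    (fun i => ∑ j : Fin 1, (0 : Matrix (Fin k) (Fin 0) ℂ)ᴴ * B i * (0 : Matrix (Fin k) (Fin 0) ℂ))]
  exact h

lemma matConvex_compress {g : ℕ} {S : GradedSet g} (hS : MatConvex S) {k s : ℕ}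
    {A : Tuple g k} (hA : A ∈ S k) (V : Matrix (Fin k) (Fin s) ℂ) (hV : Vᴴ * V = 1) :
    (fun i => Vᴴ * A i * V) ∈ S s := by
  have h := hS.2 1 s (fun _ => k) (fun _ => A) (fun _ => V) (fun _ => hA)
    (by rw [Fin.sum_univ_one]; exact hV)
  simpa using h

lemma herm_sum {n : ℕ} {ι : Type*} (M : ι → Matrix (Fin n) (Fin n) ℂ)
    (h : ∀ j, (M j).IsHermitian) (s : Finset ι) : (∑ j ∈ s, M j).IsHermitian := by
  unfold Matrix.IsHermitian
  rw [Matrix.conjTranspose_sum]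
  exact Finset.sum_congr rfl fun j _ => h j

lemma pz_reduce {g m : ℕ} {T : GradedSet g} {k r : ℕ} (hr : r ≤ m)
    {A : Tuple g k} (hA : A ∈ pzSet T m k) (U : Matrix (Fin k) (Fin r) ℂ) :
    ∃ n, ∃ C : Tuple g n, ∃ R : Matrix (Fin n) (Fin r) ℂ,
      C ∈ T n ∧ Rᴴ * R = Uᴴ * U ∧ ∀ i, Rᴴ * C i * R = Uᴴ * A i * U := by
  rcases le_or_gt r k with hrk | hkr
  · obtain ⟨Q, R, hQ, hU⟩ := exists_QR hrk U
    refine ⟨r, fun i => Qᴴ * A i * Q, R, hA.2 r hr Q hQ, ?_, ?_⟩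
    · rw [hU, Matrix.conjTranspose_mul, Matrix.mul_assoc, ← Matrix.mul_assoc Qᴴ Q R, hQ,
        Matrix.one_mul]
    · intro i
      rw [hU, Matrix.conjTranspose_mul]
      simp only [Matrix.mul_assoc]
  · refine ⟨k, A, U, ?_, rfl, fun i => rfl⟩
    have h := hA.2 k (le_of_lt (lt_of_lt_of_le hkr hr)) 1
      (by rw [Matrix.conjTranspose_one, Matrix.one_mul])
    simpa using h


/-- For a closed matrix convex set `T ⊆ 𝕊^g`: `kz_m(T)` is the smallest matrix convex set
agreeing with `T` on levels `1,…,m`, and (if `0` is an interior point of `T(1)`) `pz_m(T)`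
is the largest such matrix convex set. -/
theorem kz_smallest_pz_largest (g : ℕ) (T : GradedSet g)
    (hTherm : ∀ k, ∀ A ∈ T k, IsHermTuple A)
    (hTclosed : ∀ k, IsClosed (T k)) (hTconv : MatConvex T) (m : ℕ) :
    (MatConvex (kzSet T m) ∧ (∀ i, 1 ≤ i → i ≤ m → kzSet T m i = T i) ∧
      ∀ S : GradedSet g, (∀ k, ∀ A ∈ S k, IsHermTuple A) → MatConvex S →
        (∀ i, 1 ≤ i → i ≤ m → S i = T i) → ∀ k, kzSet T m k ⊆ S k) ∧
    (ZeroInInterior1 T →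
      MatConvex (pzSet T m) ∧ (∀ i, 1 ≤ i → i ≤ m → pzSet T m i = T i) ∧
      ∀ S : GradedSet g, (∀ k, ∀ A ∈ S k, IsHermTuple A) → MatConvex S →
        (∀ i, 1 ≤ i → i ≤ m → S i = T i) → ∀ k, S k ⊆ pzSet T m k) := by
  constructor
  · refine ⟨⟨⟨0, (fun _ => 0 : Tuple g 0), fun S hS _ => matConvex_mem_zero hS _⟩, ?_⟩, ?_, ?_⟩
    · intro r s kk A V hA hV S hS hUS
      exact hS.2 r s kk A V (fun j => hA j S hS hUS) hV
    · intro i h1 h2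
      apply Set.Subset.antisymm
      · intro B hB
        exact hB T hTconv (fun n x hx => hx.2.2)
      · intro B hB S hS hUS
        exact hUS i ⟨h1, h2, hB⟩
    · intro S _ hS hagree k B hB
      refine hB S hS (fun n x hx => ?_)
      rw [hagree n hx.1 hx.2.1]
      exact hx.2.2
  · intro _
    refine ⟨⟨⟨0, (fun _ => 0 : Tuple g 0), ?_, ?_⟩, ?_⟩, ?_, ?_⟩
    · intro i
      exact Matrix.isHermitian_zero
    · intro r hr V hV
      rcases Nat.eq_zero_or_pos r with h0 | h0
      · subst h0
        exact matConvex_mem_zero hTconv _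
      · exfalso
        have h00 : (Vᴴ * V) ⟨0, h0⟩ ⟨0, h0⟩ = (1 : Matrix (Fin r) (Fin r) ℂ) ⟨0, h0⟩ ⟨0, h0⟩ := by
          rw [hV]
        simp [Matrix.mul_apply, Matrix.one_apply] at h00
    · intro rr s kk A V hA hV
      constructor
      · intro i
        apply herm_sum
        intro j
        exact Matrix.isHermitian_conjTranspose_mul_mul (V j) ((hA j).1 i)
      · intro r hrm W hW
        choose n C R hC hRR hRCR using fun j : Fin rr => pz_reduce hrm (hA j) (V j * W)
        have hsum : (∑ j, (R j)ᴴ * R j) = 1 := by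
          have h1 : ∀ j : Fin rr, (R j)ᴴ * R j = Wᴴ * (((V j)ᴴ * V j) * W) := by
            intro j
            rw [hRR j, Matrix.conjTranspose_mul]
            simp only [Matrix.mul_assoc]
          rw [Finset.sum_congr rfl fun j _ => h1 j, ← Matrix.mul_sum, ← Matrix.sum_mul, hV,
            Matrix.one_mul, hW]
        have main := hTconv.2 rr r n C R hC hsum
        have heq : (fun i => ∑ j, (R j)ᴴ * C j i * R j)
            = (fun i => Wᴴ * (∑ j, (V j)ᴴ * A j i * V j) * W) := by
          funext i
          have h1 : ∀ j : Fin rr, (R j)ᴴ * C j i * R j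
              = Wᴴ * ((V j)ᴴ * (A j i * (V j * W))) := by
            intro j
            rw [hRCR j i, Matrix.conjTranspose_mul]
            simp only [Matrix.mul_assoc]
          rw [Finset.sum_congr rfl fun j _ => h1 j]
          simp only [Matrix.mul_assoc, Matrix.sum_mul, Matrix.mul_sum]
        exact heq ▸ main
    · intro i h1 h2
      apply Set.Subset.antisymm
      · intro B hB
        have h := hB.2 i h2 1 (by rw [Matrix.conjTranspose_one, Matrix.one_mul])
        simpa using h
      · intro B hB
        exact ⟨hTherm i B hB, fun r hr V hV => matConvex_compress hTconv hB V hV⟩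
    · intro S hherm hS hagree k B hB
      refine ⟨hherm k B hB, fun r hr V hV => ?_⟩
      have hc := matConvex_compress hS hB V hV
      rcases Nat.eq_zero_or_pos r with h0 | h0
      · subst h0
        exact matConvex_mem_zero hTconv _
      · rw [hagree r h0 hr] at hc
        exact hc
end
end

section
/- Let L = I_δ − Σ_{i=1}^g A_i X_i be a monic linear pencil of size δ that is Z-irreducible and Z-minimal. Then the unital star-subalgebra of the algebra of δ×δ complex matrices generated by A_1,…,A_g is the full matrix algebra ℂ^{δ×δ}. -/
open Matrix Kronecker
open scoped ComplexOrder

noncomputable section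

/-- The free locus of the monic linear pencil `I - ∑ A_i X_i`:
`Z(L) = {X ∈ 𝕊^g | ker L(X) ≠ {0}}`. -/
def freeLocus {g δ : ℕ} (A : Tuple g δ) : GradedSet g := fun k =>
  {X | IsHermTuple X ∧ ∃ v, v ≠ 0 ∧ (pencilEval A X).mulVec v = 0}

/-- A monic linear pencil is `Z`-irreducible if whenever its free locus is a union of two
free loci of monic pencils, it equals one of them. -/
def ZIrr {g δ : ℕ} (A : Tuple g δ) : Prop :=
  ∀ (d₁ d₂ : ℕ) (H₁ : Tuple g d₁) (H₂ : Tuple g d₂), IsHermTuple H₁ → IsHermTuple H₂ →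
    (∀ k, freeLocus H₁ k ∪ freeLocus H₂ k = freeLocus A k) →
    (∀ k, freeLocus A k = freeLocus H₁ k) ∨ (∀ k, freeLocus A k = freeLocus H₂ k)

/-- A monic linear pencil is `Z`-minimal if no monic pencil of smaller size has the same
free locus. -/
def ZMin {g δ : ℕ} (A : Tuple g δ) : Prop :=
  ¬∃ d : ℕ, d < δ ∧ ∃ H : Tuple g d, IsHermTuple H ∧ ∀ k, freeLocus H k = freeLocus A k

lemma schur {g δ : ℕ} (hδ : 0 < δ) (A : Tuple g δ)
    (hirr : ∀ W : Submodule ℂ (Fin δ → ℂ),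
      (∀ i, ∀ x ∈ W, (A i).mulVec x ∈ W) → W = ⊥ ∨ W = ⊤)
    (f : (Fin δ → ℂ) →ₗ[ℂ] (Fin δ → ℂ))
    (hf : ∀ i x, f ((A i).mulVec x) = (A i).mulVec (f x)) :
    ∃ c : ℂ, f = c • LinearMap.id := by
  haveI : Nontrivial (Fin δ → ℂ) := by
    have : Nonempty (Fin δ) := ⟨⟨0, hδ⟩⟩
    infer_instance
  obtain ⟨μ, hμ⟩ := Module.End.exists_eigenvalue (f : Module.End ℂ (Fin δ → ℂ))
  refine ⟨μ, ?_⟩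
  have hW : Module.End.eigenspace (f : Module.End ℂ (Fin δ → ℂ)) μ = ⊤ := by
    have hinv : ∀ i, ∀ x ∈ Module.End.eigenspace (f : Module.End ℂ (Fin δ → ℂ)) μ,
        (A i).mulVec x ∈ Module.End.eigenspace (f : Module.End ℂ (Fin δ → ℂ)) μ := by
      intro i x hx
      rw [Module.End.mem_eigenspace_iff] at hx ⊢
      rw [show (f : Module.End ℂ (Fin δ → ℂ)) ((A i).mulVec x) = f ((A i).mulVec x) from rfl,
        hf]
      rw [show (f : Module.End ℂ (Fin δ → ℂ)) x = f x from rfl] at hx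
      rw [hx, Matrix.mulVec_smul]
    rcases hirr _ hinv with h | h
    · exact (hμ h).elim
    · exact h
  refine LinearMap.ext fun x => ?_
  have hx : x ∈ Module.End.eigenspace (f : Module.End ℂ (Fin δ → ℂ)) μ := by
    rw [hW]; exact Submodule.mem_top
  exact (Module.End.mem_eigenspace_iff).mp hx


section Core
variable (δ : ℕ)

private lemma matCore_key (X : Matrix (Fin δ) (Fin δ) ℂ) :
    (∑ a, ∑ b, (starRingEnd ℂ) (X a b) * X a b)
      = ((∑ a, ∑ b, Complex.normSq (X a b) : ℝ) : ℂ) := by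
  push_cast
  refine Finset.sum_congr rfl fun a _ => Finset.sum_congr rfl fun b _ => ?_
  rw [Complex.normSq_eq_conj_mul_self]

def matCore : InnerProductSpace.Core ℂ (Matrix (Fin δ) (Fin δ) ℂ) where
  inner X Y := ∑ a, ∑ b, (starRingEnd ℂ) (X a b) * Y a b
  conj_inner_symm X Y := by
    simp only [map_sum, _root_.map_mul, Complex.conj_conj]
    refine Finset.sum_congr rfl fun a _ => Finset.sum_congr rfl fun b _ => ?_
    ring
  re_inner_nonneg X := by
    simp only [matCore_key]
    have : RCLike.re ((∑ a, ∑ b, Complex.normSq (X a b) : ℝ) : ℂ)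
        = (∑ a, ∑ b, Complex.normSq (X a b) : ℝ) := RCLike.ofReal_re _
    rw [this]
    exact Finset.sum_nonneg fun a _ => Finset.sum_nonneg fun b _ => Complex.normSq_nonneg _
  add_left x y z := by
    simp only [Matrix.add_apply, map_add, add_mul, Finset.sum_add_distrib]
  smul_left x y r := by
    simp only [Matrix.smul_apply, smul_eq_mul, _root_.map_mul, Finset.mul_sum, mul_assoc]
  definite X h := by
    replace h : (∑ a, ∑ b, (starRingEnd ℂ) (X a b) * X a b) = 0 := h
    rw [matCore_key] at h
    norm_cast at h
    have hz : ∀ a ∈ (Finset.univ : Finset (Fin δ)), (∑ b, Complex.normSq (X a b)) = 0 := by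
      refine (Finset.sum_eq_zero_iff_of_nonneg fun a _ =>
        Finset.sum_nonneg fun b _ => Complex.normSq_nonneg _).mp h
    ext a b
    have := (Finset.sum_eq_zero_iff_of_nonneg fun b _ => Complex.normSq_nonneg _).mp
      (hz a (Finset.mem_univ a)) b (Finset.mem_univ b)
    simpa using Complex.normSq_eq_zero.mp this

end Core

lemma matCore_inner (δ : ℕ) (X Y : Matrix (Fin δ) (Fin δ) ℂ) :
    (matCore δ).inner X Y = ∑ a, ∑ b, (starRingEnd ℂ) (X a b) * Y a b := rfl
lemma adjoin_eq_top_of_irr {g δ : ℕ} (A : Tuple g δ) (hA : IsHermTuple A)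
    (hirr : ∀ W : Submodule ℂ (Fin δ → ℂ),
      (∀ i, ∀ x ∈ W, (A i).mulVec x ∈ W) → W = ⊥ ∨ W = ⊤) :
    StarAlgebra.adjoin ℂ (Set.range A) =
      (⊤ : StarSubalgebra ℂ (Matrix (Fin δ) (Fin δ) ℂ)) := by
  rcases Nat.eq_zero_or_pos δ with hδ | hδ
  · subst hδ
    rw [eq_top_iff]
    intro X _
    have : X = 1 := by ext a b; exact a.elim0
    rw [this]; exact one_mem _
  letI core := matCore δ
  letI : NormedAddCommGroup (Matrix (Fin δ) (Fin δ) ℂ) := core.toNormedAddCommGroup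
  letI : InnerProductSpace ℂ (Matrix (Fin δ) (Fin δ) ℂ) := InnerProductSpace.ofCore core.toCore
  have hinner : ∀ X Y : Matrix (Fin δ) (Fin δ) ℂ,
      (inner ℂ X Y : ℂ) = ∑ a, ∑ b, (starRingEnd ℂ) (X a b) * Y a b := matCore_inner δ
  have htr : ∀ X Y : Matrix (Fin δ) (Fin δ) ℂ, (inner ℂ X Y : ℂ) = (Xᴴ * Y).trace := by
    intro X Y
    rw [hinner]
    simp only [Matrix.trace, Matrix.diag, Matrix.mul_apply, Matrix.conjTranspose_apply,
      Matrix.diag_apply]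
    exact Finset.sum_comm
  set S := StarAlgebra.adjoin ℂ (Set.range A) with hSdef
  set W : Submodule ℂ (Matrix (Fin δ) (Fin δ) ℂ) :=
    Subalgebra.toSubmodule S.toSubalgebra with hWdef
  have hmemW : ∀ x : Matrix (Fin δ) (Fin δ) ℂ, x ∈ W ↔ x ∈ S := fun x => Iff.rfl
  have hAW : ∀ i, A i ∈ W := fun i =>
    (hmemW _).mpr (StarAlgebra.subset_adjoin ℂ _ ⟨i, rfl⟩)
  have hmul : ∀ (i) (x), x ∈ W → A i * x ∈ W := fun i x hx =>
    (hmemW _).mpr (mul_mem ((hmemW _).mp (hAW i)) ((hmemW _).mp hx))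
  have hc : IsCompl W Wᗮ := Submodule.isCompl_orthogonal_of_hasOrthogonalProjection
  set P : Matrix (Fin δ) (Fin δ) ℂ →ₗ[ℂ] Matrix (Fin δ) (Fin δ) ℂ :=
    W.subtype.comp (W.linearProjOfIsCompl Wᗮ hc) with hPdef
  have hPW : ∀ x, P x ∈ W := fun x => (W.linearProjOfIsCompl Wᗮ hc x).2
  have hPid : ∀ x, x ∈ W → P x = x := by
    intro x hx
    show (W.linearProjOfIsCompl Wᗮ hc x : Matrix (Fin δ) (Fin δ) ℂ) = x
    exact congrArg Subtype.val (Submodule.projectionOnto_apply_left hc ⟨x, hx⟩)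
  have hPzero : ∀ x, x ∈ Wᗮ → P x = 0 := by
    intro x hx
    show (W.linearProjOfIsCompl Wᗮ hc x : Matrix (Fin δ) (Fin δ) ℂ) = 0
    exact congrArg Subtype.val (Submodule.projectionOnto_apply_of_mem_right hc hx)
  have hPerp : ∀ x, x - P x ∈ Wᗮ := by
    intro x
    have hx : x ∈ W ⊔ Wᗮ := by rw [hc.sup_eq_top]; trivial
    obtain ⟨u, hu, v, hv, hx⟩ := Submodule.mem_sup.mp hx
    have : P x = u := by rw [← hx, map_add, hPid u hu, hPzero v hv, add_zero]
    rw [this, ← hx, add_sub_cancel_left]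
    exact hv
  have hAdj : ∀ (i) (w y : Matrix (Fin δ) (Fin δ) ℂ),
      (inner ℂ w (A i * y) : ℂ) = inner ℂ (A i * w) y := by
    intro i w y
    rw [htr, htr, Matrix.conjTranspose_mul, (hA i).eq, Matrix.mul_assoc]
  have hAperp : ∀ (i) (y), y ∈ Wᗮ → A i * y ∈ Wᗮ := by
    intro i y hy
    rw [Submodule.mem_orthogonal]
    intro u hu
    rw [hAdj]
    exact (Submodule.mem_orthogonal W y).mp hy _ (hmul i u hu)
  have hPcomm : ∀ i x, P (A i * x) = A i * P x := by
    intro i x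
    have hdW : P (A i * x) - A i * P x ∈ W := sub_mem (hPW _) (hmul i _ (hPW x))
    have hdO : P (A i * x) - A i * P x ∈ Wᗮ := by
      have h1 : A i * x - A i * P x ∈ Wᗮ := by
        rw [← Matrix.mul_sub]
        exact hAperp i _ (hPerp x)
      have h2 : A i * x - P (A i * x) ∈ Wᗮ := hPerp _
      have := sub_mem h1 h2
      simpa using this
    have := Submodule.disjoint_def.mp hc.disjoint _ hdW hdO
    exact sub_eq_zero.mp this
  -- the column maps
  set E : Fin δ → ((Fin δ → ℂ) →ₗ[ℂ] Matrix (Fin δ) (Fin δ) ℂ) := fun k =>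
    { toFun := fun x => Matrix.vecMulVec x (Pi.single k 1)
      map_add' := by intro x y; ext a b; simp [Matrix.vecMulVec_apply, add_mul]
      map_smul' := by intro r x; ext a b; simp [Matrix.vecMulVec_apply]; ring } with hEdef
  set C : Fin δ → (Matrix (Fin δ) (Fin δ) ℂ →ₗ[ℂ] (Fin δ → ℂ)) := fun j =>
    { toFun := fun X a => X a j
      map_add' := by intro x y; rfl
      map_smul' := by intro r x; rfl } with hCdef
  have hEmul : ∀ (i k) (x : Fin δ → ℂ), E k ((A i).mulVec x) = A i * E k x := by
    intro i k x
    ext a b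
    simp [hEdef, Matrix.vecMulVec_apply, Matrix.mul_apply, Matrix.mulVec, dotProduct,
      Finset.sum_mul, mul_assoc]
  have hCmul : ∀ (i j) (X : Matrix (Fin δ) (Fin δ) ℂ), C j (A i * X) = (A i).mulVec (C j X) := by
    intro i j X
    funext a
    simp [hCdef, Matrix.mul_apply, Matrix.mulVec, dotProduct]
    rfl
  set φ : Fin δ → Fin δ → ((Fin δ → ℂ) →ₗ[ℂ] (Fin δ → ℂ)) := fun j k =>
    (C j).comp (P.comp (E k)) with hφdef
  have hφcomm : ∀ j k i x, φ j k ((A i).mulVec x) = (A i).mulVec (φ j k x) := by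
    intro j k i x
    show C j (P (E k ((A i).mulVec x))) = (A i).mulVec (C j (P (E k x)))
    rw [hEmul, hPcomm, hCmul]
  have hφ : ∀ j k, ∃ c : ℂ, φ j k = c • LinearMap.id := fun j k =>
    schur hδ A hirr (φ j k) (fun i x => hφcomm j k i x)
  choose c hcspec using hφ
  have hφeval : ∀ (j k) (x : Fin δ → ℂ) (a), P (E k x) a j = c j k * x a := by
    intro j k x a
    have h1 : φ j k x = c j k • x := by rw [hcspec j k]; rfl
    have h2 : φ j k x a = P (E k x) a j := rfl
    rw [← h2, h1]
    rfl
  have hdecomp : ∀ X : Matrix (Fin δ) (Fin δ) ℂ, X = ∑ k, E k (fun a => X a k) := by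
    intro X
    ext a b
    rw [Matrix.sum_apply]
    simp [hEdef, Matrix.vecMulVec_apply, Pi.single_apply]
  have hPall : ∀ (X : Matrix (Fin δ) (Fin δ) ℂ) (a j), P X a j = ∑ k, c j k * X a k := by
    intro X a j
    conv_lhs => rw [hdecomp X, map_sum]
    rw [Matrix.sum_apply]
    exact Finset.sum_congr rfl fun k _ => hφeval j k _ a
  have hc1 : ∀ a j, c j a = (1 : Matrix (Fin δ) (Fin δ) ℂ) a j := by
    intro a j
    have h1 : P 1 = 1 := hPid 1 ((hmemW _).mpr (one_mem S))
    have := hPall 1 a j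
    rw [h1] at this
    rw [this]
    simp [Matrix.one_apply]
  have hPX : ∀ X : Matrix (Fin δ) (Fin δ) ℂ, P X = X := by
    intro X
    ext a j
    rw [hPall X a j]
    have : ∀ k, c j k = if k = j then 1 else 0 := by
      intro k; rw [hc1 k j, Matrix.one_apply]
    simp [this]
  rw [eq_top_iff]
  intro X _
  have : X ∈ W := by rw [← hPX X]; exact hPW X
  exact (hmemW X).mp this


def toEuc {δ : ℕ} (x : Fin δ → ℂ) : EuclideanSpace ℂ (Fin δ) := WithLp.toLp 2 x

@[simp] lemma toEuc_apply {δ : ℕ} (x : Fin δ → ℂ) (a : Fin δ) : toEuc x a = x a := rfl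

lemma inner_mulVec_adjoint {δ : ℕ} (A : Matrix (Fin δ) (Fin δ) ℂ)
    (u y : Fin δ → ℂ) :
    (inner ℂ (toEuc u) (toEuc (A.mulVec y)) : ℂ)
      = inner ℂ (toEuc (Aᴴ.mulVec u)) (toEuc y) := by
  simp only [PiLp.inner_apply, RCLike.inner_apply, toEuc_apply, Matrix.mulVec,
    dotProduct, Matrix.conjTranspose_apply, map_sum, _root_.map_mul,
    Complex.conj_conj, Complex.star_def, Finset.mul_sum, Finset.sum_mul]
  rw [Finset.sum_comm]
  refine Finset.sum_congr rfl fun a _ => Finset.sum_congr rfl fun b _ => ?_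
  ring

lemma exists_split {g δ : ℕ} (A : Tuple g δ) (hA : IsHermTuple A)
    (W : Submodule ℂ (Fin δ → ℂ)) (hInv : ∀ i, ∀ x ∈ W, (A i).mulVec x ∈ W)
    (hbot : W ≠ ⊥) (htop : W ≠ ⊤) :
    ∃ (d e : ℕ) (H₁ : Tuple g d) (H₂ : Tuple g e) (U : Matrix (Fin δ) (Fin d ⊕ Fin e) ℂ),
      0 < d ∧ 0 < e ∧ d + e = δ ∧ IsHermTuple H₁ ∧ IsHermTuple H₂ ∧
      Uᴴ * U = 1 ∧ U * Uᴴ = 1 ∧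
      ∀ i, Uᴴ * A i * U = Matrix.fromBlocks (H₁ i) 0 0 (H₂ i) := by
  set V := EuclideanSpace ℂ (Fin δ) with hV
  set W' : Submodule ℂ V := W.comap (WithLp.linearEquiv 2 ℂ (Fin δ → ℂ)).toLinearMap with hW'
  have hWbot : W' ≠ ⊥ := by
    intro h; apply hbot; rw [eq_bot_iff] at h ⊢; intro x hx
    have := (Submodule.mem_bot ℂ).mp (h (show toEuc x ∈ W' from hx))
    simpa [toEuc] using congrArg WithLp.ofLp this
  have hWtop : W' ≠ ⊤ := by
    intro h; apply htop; rw [eq_top_iff] at h ⊢; intro x _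
    have := h (Submodule.mem_top (x := toEuc x)); exact this
  set d := Module.finrank ℂ W' with hd
  set e := Module.finrank ℂ W'ᗮ with he
  have hde : d + e = δ := by
    rw [hd, he, Submodule.finrank_add_finrank_orthogonal]
    show Module.finrank ℂ (EuclideanSpace ℂ (Fin δ)) = δ
    rw [finrank_euclideanSpace, Fintype.card_fin]
  have hdpos : 0 < d := by
    rcases Nat.eq_zero_or_pos d with h | h
    · exact absurd (Submodule.finrank_eq_zero.mp h) hWbot
    · exact h
  have hepos : 0 < e := by
    rcases Nat.eq_zero_or_pos e with h | h
    · exact absurd (Submodule.orthogonal_eq_bot_iff.mp (Submodule.finrank_eq_zero.mp h)) hWtop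
    · exact h
  set b₁ := stdOrthonormalBasis ℂ W' with hb₁
  set b₂ := stdOrthonormalBasis ℂ W'ᗮ with hb₂
  set U : Matrix (Fin δ) (Fin d ⊕ Fin e) ℂ :=
    fun a p => Sum.elim (fun j => ((b₁ j : V)) a) (fun j => ((b₂ j : V)) a) p with hU
  have hcolL : ∀ j : Fin d, toEuc (fun a => U a (Sum.inl j)) = (b₁ j : V) := fun j => rfl
  have hcolR : ∀ j : Fin e, toEuc (fun a => U a (Sum.inr j)) = (b₂ j : V) := fun j => rfl
  have hinner : ∀ p q : Fin d ⊕ Fin e, (Uᴴ * U) p q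
      = (inner ℂ (toEuc (fun a => U a p)) (toEuc (fun a => U a q)) : ℂ) := by
    intro p q
    simp [Matrix.mul_apply, Matrix.conjTranspose_apply, PiLp.inner_apply, RCLike.inner_apply]
    exact Finset.sum_congr rfl fun _ _ => mul_comm _ _
  have hb₁b₁ : ∀ j j' : Fin d, (inner ℂ ((b₁ j : V)) ((b₁ j' : V)) : ℂ)
      = if j = j' then 1 else 0 := by
    intro j j'
    rw [← Submodule.coe_inner]
    exact orthonormal_iff_ite.mp b₁.orthonormal j j'
  have hb₂b₂ : ∀ j j' : Fin e, (inner ℂ ((b₂ j : V)) ((b₂ j' : V)) : ℂ)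
      = if j = j' then 1 else 0 := by
    intro j j'
    rw [← Submodule.coe_inner]
    exact orthonormal_iff_ite.mp b₂.orthonormal j j'
  have hWperp : ∀ (x : V), x ∈ W' → ∀ (y : V), y ∈ W'ᗮ → (inner ℂ x y : ℂ) = 0 := by
    intro x hx y hy
    exact (Submodule.mem_orthogonal W' y).mp hy x hx
  have hWperp' : ∀ (y : V), y ∈ W'ᗮ → ∀ (x : V), x ∈ W' → (inner ℂ y x : ℂ) = 0 := by
    intro y hy x hx
    exact (Submodule.mem_orthogonal' W' y).mp hy x hx
  have hU1 : Uᴴ * U = 1 := by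
    ext p q
    rw [hinner p q]
    rcases p with j | j <;> rcases q with j' | j'
    · rw [hcolL, hcolL, hb₁b₁]
      simp [Matrix.one_apply]
    · rw [hcolL, hcolR, hWperp _ (b₁ j).2 _ (b₂ j').2]
      simp [Matrix.one_apply]
    · rw [hcolR, hcolL, hWperp' _ (b₂ j).2 _ (b₁ j').2]
      simp [Matrix.one_apply]
    · rw [hcolR, hcolR, hb₂b₂]
      simp [Matrix.one_apply]
  have hU2 : U * Uᴴ = 1 := by
    have equ : (Fin d ⊕ Fin e) ≃ Fin δ := finSumFinEquiv.trans (finCongr hde)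
    exact (Matrix.mul_eq_one_comm_of_equiv equ).mp hU1
  have hInv' : ∀ i, ∀ x : V, x ∈ W' → toEuc ((A i).mulVec x) ∈ W' := fun i x hx => hInv i _ hx
  have hInvPerp : ∀ i, ∀ y : V, y ∈ W'ᗮ → toEuc ((A i).mulVec y) ∈ W'ᗮ := by
    intro i y hy
    rw [Submodule.mem_orthogonal]
    intro u hu
    have : (inner ℂ u (toEuc ((A i).mulVec y)) : ℂ)
        = inner ℂ (toEuc ((A i)ᴴ.mulVec u)) (toEuc y) := inner_mulVec_adjoint (A i) u y
    rw [this, (hA i).eq]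
    exact hWperp _ (hInv' i u hu) _ hy
  have hentry : ∀ (i : Fin g) (p q : Fin d ⊕ Fin e),
      (Uᴴ * A i * U) p q
        = (inner ℂ (toEuc (fun a => U a p)) (toEuc ((A i).mulVec (fun a => U a q))) : ℂ) := by
    intro i p q
    rw [Matrix.mul_assoc]
    simp only [Matrix.mul_apply, Matrix.conjTranspose_apply, PiLp.inner_apply,
      RCLike.inner_apply, toEuc_apply, Matrix.mulVec, dotProduct, Complex.star_def]
    exact Finset.sum_congr rfl fun _ _ => mul_comm _ _
  set H₁ : Tuple g d := fun i => Matrix.of fun j j' => (Uᴴ * A i * U) (Sum.inl j) (Sum.inl j')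
    with hH₁
  set H₂ : Tuple g e := fun i => Matrix.of fun j j' => (Uᴴ * A i * U) (Sum.inr j) (Sum.inr j')
    with hH₂
  have hBi : ∀ i, Uᴴ * A i * U = Matrix.fromBlocks (H₁ i) 0 0 (H₂ i) := by
    intro i
    ext p q
    rcases p with j | j <;> rcases q with j' | j'
    · simp [hH₁]
    · rw [hentry]
      have h0 : (inner ℂ (toEuc (fun a => U a (Sum.inl j)))
          (toEuc ((A i).mulVec (fun a => U a (Sum.inr j')))) : ℂ) = 0 := by
        rw [hcolL]
        exact hWperp _ (b₁ j).2 _ (hInvPerp i _ (b₂ j').2)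
      rw [h0]
      simp
    · rw [hentry]
      have h0 : (inner ℂ (toEuc (fun a => U a (Sum.inr j)))
          (toEuc ((A i).mulVec (fun a => U a (Sum.inl j')))) : ℂ) = 0 := by
        rw [hcolR]
        exact hWperp' _ (b₂ j).2 _ (hInv' i _ (b₁ j').2)
      rw [h0]
      simp
    · simp [hH₂]
  have hBherm : ∀ i, (Uᴴ * A i * U).IsHermitian := by
    intro i
    unfold Matrix.IsHermitian
    rw [Matrix.conjTranspose_mul, Matrix.conjTranspose_mul, Matrix.conjTranspose_conjTranspose,
      (hA i).eq, Matrix.mul_assoc]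
  refine ⟨d, e, H₁, H₂, U, hdpos, hepos, hde, ?_, ?_, hU1, hU2, hBi⟩
  · intro i
    ext j j'
    have := congrFun (congrFun (hBherm i) (Sum.inl j)) (Sum.inl j')
    simpa [Matrix.conjTranspose_apply, hH₁] using this
  · intro i
    ext j j'
    have := congrFun (congrFun (hBherm i) (Sum.inr j)) (Sum.inr j')
    simpa [Matrix.conjTranspose_apply, hH₂] using this


lemma kron_conjTranspose {m n p q : Type*} [Fintype m] [Fintype n] [Fintype p] [Fintype q]
    (X : Matrix m n ℂ) (Y : Matrix p q ℂ) : (X ⊗ₖ Y)ᴴ = Xᴴ ⊗ₖ Yᴴ := by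
  ext ⟨a, b⟩ ⟨c, d⟩
  simp [Matrix.conjTranspose_apply, Matrix.kroneckerMap_apply, mul_comm]

/-- kernel transfer under unitary conjugation -/
lemma kernel_conj {m n : Type*} [Fintype m] [Fintype n] [DecidableEq m] [DecidableEq n]
    (M : Matrix m m ℂ) (Q : Matrix m n ℂ) (hQ1 : Qᴴ * Q = 1) (hQ2 : Q * Qᴴ = 1) :
    (∃ v ≠ 0, M.mulVec v = 0) ↔ (∃ w ≠ 0, (Qᴴ * M * Q).mulVec w = 0) := by
  constructor
  · rintro ⟨v, hv, hMv⟩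
    refine ⟨Qᴴ.mulVec v, ?_, ?_⟩
    · intro h
      apply hv
      have := congrArg (Q.mulVec ·) h
      simp only [Matrix.mulVec_mulVec, hQ2, Matrix.mulVec_zero] at this
      rwa [Matrix.one_mulVec] at this
    · rw [Matrix.mulVec_mulVec]
      have : Qᴴ * M * Q * Qᴴ = Qᴴ * M := by
        rw [Matrix.mul_assoc (Qᴴ * M), hQ2, Matrix.mul_one]
      rw [this, ← Matrix.mulVec_mulVec, hMv, Matrix.mulVec_zero]
  · rintro ⟨w, hw, hNw⟩
    refine ⟨Q.mulVec w, ?_, ?_⟩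
    · intro h
      apply hw
      have := congrArg (Qᴴ.mulVec ·) h
      simp only [Matrix.mulVec_mulVec, hQ1, Matrix.mulVec_zero] at this
      rwa [Matrix.one_mulVec] at this
    · have hMQ : M * Q = Q * (Qᴴ * M * Q) := by
        rw [← Matrix.mul_assoc, ← Matrix.mul_assoc, hQ2, Matrix.one_mul]
      rw [Matrix.mulVec_mulVec, hMQ, ← Matrix.mulVec_mulVec, hNw, Matrix.mulVec_zero]

lemma kernel_submatrix {m n : Type*} [Fintype m] [Fintype n] [DecidableEq m] [DecidableEq n]
    (M : Matrix m m ℂ) (σ : n ≃ m) :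
    (∃ w ≠ 0, (M.submatrix σ σ).mulVec w = 0) ↔ (∃ v ≠ 0, M.mulVec v = 0) := by
  constructor
  · rintro ⟨w, hw, h⟩
    refine ⟨w ∘ σ.symm, ?_, ?_⟩
    · intro hz
      apply hw
      funext a
      have := congrFun hz (σ a)
      simpa using this
    · have hs : M.submatrix σ σ *ᵥ w = (M *ᵥ (w ∘ σ.symm)) ∘ σ :=
        Matrix.submatrix_mulVec_equiv M w σ σ
      rw [hs] at h
      funext a
      have := congrFun h (σ.symm a)
      simpa using this
  · rintro ⟨v, hv, h⟩
    refine ⟨v ∘ σ, ?_, ?_⟩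
    · intro hz
      apply hv
      funext a
      have := congrFun hz (σ.symm a)
      simpa using this
    · have hs : M.submatrix σ σ *ᵥ (v ∘ σ) = (M *ᵥ ((v ∘ σ) ∘ σ.symm)) ∘ σ :=
        Matrix.submatrix_mulVec_equiv M (v ∘ σ) σ σ
      have hvs : (v ∘ σ) ∘ σ.symm = v := by funext b; simp
      rw [hs, hvs, h]
      rfl

lemma kernel_blocks {m n : Type*} [Fintype m] [Fintype n] [DecidableEq m] [DecidableEq n]
    (M₁ : Matrix m m ℂ) (M₂ : Matrix n n ℂ) :
    (∃ w ≠ 0, (Matrix.fromBlocks M₁ 0 0 M₂).mulVec w = 0)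
      ↔ (∃ v ≠ 0, M₁.mulVec v = 0) ∨ (∃ v ≠ 0, M₂.mulVec v = 0) := by
  constructor
  · rintro ⟨w, hw, h⟩
    rw [Matrix.fromBlocks_mulVec] at h
    simp only [Matrix.zero_mulVec, add_zero, zero_add] at h
    by_cases h1 : (fun a => w (Sum.inl a)) = 0
    · right
      refine ⟨fun a => w (Sum.inr a), ?_, ?_⟩
      · intro h2
        apply hw
        funext p
        rcases p with a | a
        · exact congrFun h1 a
        · exact congrFun h2 a
      · funext a
        have := congrFun h (Sum.inr a)
        simpa [Matrix.mulVec, Function.comp_def] using this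
    · left
      refine ⟨fun a => w (Sum.inl a), h1, ?_⟩
      funext a
      have := congrFun h (Sum.inl a)
      simpa [Matrix.mulVec, Function.comp_def] using this
  · rintro (⟨v, hv, h⟩ | ⟨v, hv, h⟩)
    · refine ⟨Sum.elim v 0, ?_, ?_⟩
      · intro hz
        apply hv
        funext a
        exact congrFun hz (Sum.inl a)
      · rw [Matrix.fromBlocks_mulVec]
        funext p
        rcases p with a | a
        · simpa [Matrix.mulVec] using congrFun h a
        · simp [Matrix.mulVec, dotProduct]
    · refine ⟨Sum.elim 0 v, ?_, ?_⟩
      · intro hz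
        apply hv
        funext a
        exact congrFun hz (Sum.inr a)
      · rw [Matrix.fromBlocks_mulVec]
        funext p
        rcases p with a | a
        · simp [Matrix.mulVec, dotProduct]
        · simpa [Matrix.mulVec] using congrFun h a

lemma locus_union {g δ d e : ℕ} (A : Tuple g δ) (H₁ : Tuple g d) (H₂ : Tuple g e)
    (U : Matrix (Fin δ) (Fin d ⊕ Fin e) ℂ) (hU1 : Uᴴ * U = 1) (hU2 : U * Uᴴ = 1)
    (hB : ∀ i, Uᴴ * A i * U = Matrix.fromBlocks (H₁ i) 0 0 (H₂ i)) (k : ℕ) :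
    freeLocus H₁ k ∪ freeLocus H₂ k = freeLocus A k := by
  ext X
  have key : (∃ v ≠ 0, (pencilEval A X).mulVec v = 0)
      ↔ (∃ v ≠ 0, (pencilEval H₁ X).mulVec v = 0) ∨ (∃ v ≠ 0, (pencilEval H₂ X).mulVec v = 0) := by
    set UK : Matrix (Fin δ × Fin k) ((Fin d ⊕ Fin e) × Fin k) ℂ :=
      U ⊗ₖ (1 : Matrix (Fin k) (Fin k) ℂ) with hUK
    have hUKH : UKᴴ = Uᴴ ⊗ₖ (1 : Matrix (Fin k) (Fin k) ℂ) := by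
      rw [hUK, kron_conjTranspose, Matrix.conjTranspose_one]
    have hUK1 : UKᴴ * UK = 1 := by
      rw [hUKH, hUK, ← Matrix.mul_kronecker_mul, hU1, Matrix.one_mul, Matrix.one_kronecker_one]
    have hUK2 : UK * UKᴴ = 1 := by
      rw [hUKH, hUK, ← Matrix.mul_kronecker_mul, hU2, Matrix.one_mul, Matrix.one_kronecker_one]
    have hconj : UKᴴ * pencilEval A X * UK
        = 1 - ∑ i, (Matrix.fromBlocks (H₁ i) 0 0 (H₂ i)) ⊗ₖ X i := by
      unfold pencilEval
      rw [Matrix.mul_sub, Matrix.mul_one, Matrix.sub_mul, hUK1, Matrix.mul_assoc,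
        Matrix.sum_mul, Matrix.mul_sum]
      congr 1
      refine Finset.sum_congr rfl fun i _ => ?_
      rw [hUK, hUKH, ← Matrix.mul_kronecker_mul, ← Matrix.mul_kronecker_mul, Matrix.one_mul,
        Matrix.mul_one, ← Matrix.mul_assoc, hB i]
    set σ : ((Fin d × Fin k) ⊕ (Fin e × Fin k)) ≃ ((Fin d ⊕ Fin e) × Fin k) :=
      (Equiv.sumProdDistrib (Fin d) (Fin e) (Fin k)).symm with hσ
    set N : Matrix ((Fin d ⊕ Fin e) × Fin k) ((Fin d ⊕ Fin e) × Fin k) ℂ :=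
      1 - ∑ i, (Matrix.fromBlocks (H₁ i) 0 0 (H₂ i)) ⊗ₖ X i with hN
    have hsub : N.submatrix σ σ
        = Matrix.fromBlocks (pencilEval H₁ X) 0 0 (pencilEval H₂ X) := by
      ext p q
      rcases p with ⟨j, t⟩ | ⟨j, t⟩ <;> rcases q with ⟨j', t'⟩ | ⟨j', t'⟩ <;>
        simp [hN, hσ, pencilEval, Matrix.submatrix_apply, Equiv.sumProdDistrib,
          Matrix.sub_apply, Matrix.sum_apply, Matrix.kroneckerMap_apply, Matrix.one_apply,
          Prod.ext_iff]
    calc (∃ v ≠ 0, (pencilEval A X).mulVec v = 0)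
        ↔ (∃ w ≠ 0, (UKᴴ * pencilEval A X * UK).mulVec w = 0) :=
          kernel_conj _ UK hUK1 hUK2
      _ ↔ (∃ w ≠ 0, N.mulVec w = 0) := by rw [hconj]
      _ ↔ (∃ w ≠ 0, (N.submatrix σ σ).mulVec w = 0) := (kernel_submatrix N σ).symm
      _ ↔ _ := by
          rw [hsub]
          exact kernel_blocks _ _
  constructor
  · rintro (⟨hX, hker⟩ | ⟨hX, hker⟩)
    · exact ⟨hX, key.mpr (Or.inl hker)⟩
    · exact ⟨hX, key.mpr (Or.inr hker)⟩
  · rintro ⟨hX, hker⟩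
    rcases key.mp hker with h | h
    · exact Or.inl ⟨hX, h⟩
    · exact Or.inr ⟨hX, h⟩

/-- If a monic linear pencil `L = I - ∑ A_i X_i` of size `δ` is `Z`-irreducible and
`Z`-minimal, then the unital star-subalgebra of `ℂ^{δ×δ}` generated by `A_1, …, A_g` is
the full matrix algebra. -/
theorem star_algebra_of_Zirr_Zmin (g δ : ℕ) (A : Tuple g δ) (hA : IsHermTuple A)
    (hirr : ZIrr A) (hmin : ZMin A) :
    StarAlgebra.adjoin ℂ (Set.range A) =
      (⊤ : StarSubalgebra ℂ (Matrix (Fin δ) (Fin δ) ℂ)) := by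

  by_contra hne
  have hW : ¬ ∀ W : Submodule ℂ (Fin δ → ℂ),
      (∀ i, ∀ x ∈ W, (A i).mulVec x ∈ W) → W = ⊥ ∨ W = ⊤ :=
    fun h => hne (adjoin_eq_top_of_irr A hA h)
  push_neg at hW
  obtain ⟨W, hInv, hWbot, hWtop⟩ := hW
  obtain ⟨d, e, H₁, H₂, U, hd, he, hde, hH₁, hH₂, hU1, hU2, hB⟩ :=
    exists_split A hA W hInv hWbot hWtop
  have hloc : ∀ k, freeLocus H₁ k ∪ freeLocus H₂ k = freeLocus A k :=
    locus_union A H₁ H₂ U hU1 hU2 hB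
  rcases hirr d e H₁ H₂ hH₁ hH₂ hloc with h | h
  · exact hmin ⟨d, by omega, H₁, hH₁, fun k => (h k).symm⟩
  · exact hmin ⟨e, by omega, H₂, hH₂, fun k => (h k).symm⟩
end
end

section
/- Let A = (A_1,…,A_g) be a g-tuple of δ×δ hermitian complex matrices and k ∈ ℕ. Let p be the determinant of the (δk)×(δk) matrix I − Σ_{i=1}^g A_i ⊗ 𝒴^i over the multivariate polynomial ring ℂ[𝒴^i_{αβ} : 1 ≤ i ≤ g, 1 ≤ α,β ≤ k], where 𝒴^i is the k×k matrix of commuting variables (𝒴^i_{αβ})_{α,β} and ⊗ is the Kronecker product. Then the total degree of p equals the maximum over all tuples B ∈ (ℂ^{k×k})^g of the rank of the (δk)×(δk) matrix Σ_{i=1}^g A_i ⊗ B_i. -/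
open Matrix Kronecker Polynomial

noncomputable section

namespace PencilProof
open MvPolynomial

variable {n : Type*} [Fintype n] [DecidableEq n]

/-- rank factorization: P * A * Q = 1 with r = rank A -/
lemma exists_pq (A : Matrix n n ℂ) :
    ∃ (P : Matrix (Fin A.rank) n ℂ) (Q : Matrix n (Fin A.rank) ℂ), P * A * Q = 1 := by
  classical
  let f := A.mulVecLin
  have hfr : Module.finrank ℂ (LinearMap.range f) = A.rank := rfl
  let b : Module.Basis (Fin A.rank) ℂ (LinearMap.range f) := Module.finBasisOfFinrankEq ℂ _ hfr
  choose v hv using fun j => (b j).2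
  obtain ⟨W', hW'⟩ := Submodule.exists_isCompl (LinearMap.range f)
  let π := (LinearMap.range f).linearProjOfIsCompl W' hW'
  let w : (n → ℂ) →ₗ[ℂ] (Fin A.rank → ℂ) := (b.equivFun : _ ≃ₗ[ℂ] _).toLinearMap.comp π
  let u : (Fin A.rank → ℂ) →ₗ[ℂ] (n → ℂ) := (Pi.basisFun ℂ (Fin A.rank)).constr ℂ v
  have key : w ∘ₗ (f ∘ₗ u) = LinearMap.id := by
    apply (Pi.basisFun ℂ (Fin A.rank)).ext
    intro j
    have h1 : u ((Pi.basisFun ℂ (Fin A.rank)) j) = v j := Module.Basis.constr_basis _ _ _ _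
    have h2 : f (v j) = (b j : n → ℂ) := hv j
    have h3 : π (b j : n → ℂ) = b j := Submodule.linearProjOfIsCompl_apply_left hW' (b j)
    simp only [LinearMap.comp_apply, h1, h2, LinearMap.id_apply]
    show b.equivFun (π ((b j : n → ℂ))) = _
    rw [h3]
    ext i
    simp [Module.Basis.equivFun_self, Pi.basisFun_apply, Pi.single_apply, eq_comm]
  refine ⟨LinearMap.toMatrix' w, LinearMap.toMatrix' u, ?_⟩
  have hA : A = LinearMap.toMatrix' f := by
    rw [show f = Matrix.toLin' A from rfl, LinearMap.toMatrix'_toLin']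
  have h4 : LinearMap.toMatrix' w * LinearMap.toMatrix' f * LinearMap.toMatrix' u = 1 := by
    rw [← LinearMap.toMatrix'_comp, ← LinearMap.toMatrix'_comp, LinearMap.comp_assoc, key,
      LinearMap.toMatrix'_id]
  rw [← hA] at h4
  exact h4

lemma rank_ge_of_pq {r : ℕ} (N : Matrix n n ℂ) (P : Matrix (Fin r) n ℂ)
    (Q : Matrix n (Fin r) ℂ) (h : (P * N * Q).det ≠ 0) : r ≤ N.rank := by
  have h1 : (P * N * Q).rank = r := by
    rw [Matrix.rank_of_isUnit _ ((Matrix.isUnit_iff_isUnit_det _).2 (isUnit_iff_ne_zero.2 h))]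
    simp
  calc r = (P * N * Q).rank := h1.symm
    _ ≤ (N * Q).rank := by rw [Matrix.mul_assoc]; exact Matrix.rank_mul_le_right _ _
    _ ≤ N.rank := Matrix.rank_mul_le_left _ _

open MvPolynomial

variable {σ : Type*}

/-- homogenization-specialization: substitute `X v ↦ C (x v) * X`. -/
def ψ (x : σ → ℂ) : MvPolynomial σ ℂ →+* Polynomial ℂ :=
  MvPolynomial.eval₂Hom Polynomial.C (fun v => Polynomial.C (x v) * Polynomial.X)

lemma ψ_monomial (x : σ → ℂ) (m : σ →₀ ℕ) (a : ℂ) :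
    ψ x (MvPolynomial.monomial m a)
      = Polynomial.C (a * m.prod fun v e => x v ^ e)
          * Polynomial.X ^ (m.sum fun _ e => e) := by
  rw [ψ, eval₂Hom_monomial]
  rw [Finsupp.prod, Finsupp.prod, Finsupp.sum]
  simp only [mul_pow, ← Polynomial.C_pow]
  rw [Finset.prod_mul_distrib, ← map_prod, Finset.prod_pow_eq_pow_sum, _root_.map_mul, mul_assoc]

lemma natDegree_ψ_le (x : σ → ℂ) (p : MvPolynomial σ ℂ) :
    (ψ x p).natDegree ≤ p.totalDegree := by
  conv_lhs => rw [p.as_sum]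
  rw [map_sum]
  apply Polynomial.natDegree_sum_le_of_forall_le
  intro m hm
  rw [ψ_monomial]
  refine (Polynomial.natDegree_C_mul_le _ _).trans ?_
  refine (Polynomial.natDegree_X_pow_le _).trans ?_
  exact MvPolynomial.le_totalDegree hm

lemma coeff_ψ (x : σ → ℂ) (p : MvPolynomial σ ℂ) (d : ℕ) :
    (ψ x p).coeff d = MvPolynomial.eval x (MvPolynomial.homogeneousComponent d p) := by
  conv_lhs => rw [p.as_sum]
  rw [map_sum, Polynomial.finset_sum_coeff, MvPolynomial.homogeneousComponent_apply, map_sum,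
    Finset.sum_filter]
  apply Finset.sum_congr rfl
  intro m hm
  rw [ψ_monomial, Polynomial.coeff_C_mul, Polynomial.coeff_X_pow, MvPolynomial.eval_monomial]
  have hdeg : m.degree = m.sum fun _ e => e := by
    rw [Finsupp.degree, Finsupp.sum]; rfl
  by_cases h : (m.sum fun _ e => e) = d
  · rw [if_pos (by omega : d = m.sum fun _ e => e), if_pos (by rw [hdeg, h]), mul_one]
  · rw [if_neg (by omega : ¬ d = m.sum fun _ e => e), if_neg (by rw [hdeg]; exact h), mul_zero]

lemma homComp_top_ne_zero (p : MvPolynomial σ ℂ) (hp : p ≠ 0) :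
    MvPolynomial.homogeneousComponent p.totalDegree p ≠ 0 := by
  obtain ⟨m, hm, hdeg⟩ : ∃ m ∈ p.support, (m.sum fun _ e => e) = p.totalDegree := by
    obtain ⟨m, hm, h⟩ := Finset.exists_mem_eq_sup p.support
      (MvPolynomial.support_nonempty.2 hp) (fun s => s.sum fun _ e => e)
    exact ⟨m, hm, h.symm⟩
  intro h0
  have hc := MvPolynomial.coeff_homogeneousComponent (n := p.totalDegree) (φ := p) m
  rw [h0, MvPolynomial.coeff_zero, if_pos (by rw [show m.degree = m.sum fun _ e => e from by rw [Finsupp.degree, Finsupp.sum]; rfl]; exact hdeg)] at hc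
  exact (MvPolynomial.mem_support_iff.1 hm) hc.symm

open MvPolynomial

abbrev R2 : Type := Polynomial (Polynomial ℂ)

def e2 : ℂ →+* R2 := Polynomial.C.comp Polynomial.C

def zR : R2 := Polynomial.C Polynomial.X + Polynomial.C (Polynomial.C Complex.I) * Polynomial.X
def wR : R2 := Polynomial.C Polynomial.X - Polynomial.C (Polynomial.C Complex.I) * Polynomial.X

def Ev (a b : ℂ) : R2 →+* ℂ :=
  (Polynomial.evalRingHom b).comp (Polynomial.mapRingHom (Polynomial.evalRingHom a))

@[simp] lemma Ev_e2 (a b c : ℂ) : Ev a b (e2 c) = c := by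
  simp [Ev, e2]

@[simp] lemma Ev_z (a b : ℂ) : Ev a b zR = a + Complex.I * b := by
  simp [Ev, zR]

@[simp] lemma Ev_w (a b : ℂ) : Ev a b wR = a - Complex.I * b := by
  simp [Ev, wR]


lemma exists_real_eval_ne (c : Polynomial ℂ) (hc : c ≠ 0) : ∃ a : ℝ, c.eval (a : ℂ) ≠ 0 := by
  have hfin := c.finite_setOf_isRoot hc
  have hinf : (Set.range ((↑) : ℝ → ℂ)).Infinite :=
    Set.infinite_range_of_injective Complex.ofReal_injective
  obtain ⟨z, hz⟩ := (hinf.diff hfin).nonempty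
  obtain ⟨a, rfl⟩ := hz.1
  exact ⟨a, hz.2⟩

lemma exists_real_point (h : Polynomial (Polynomial ℂ)) (hh : h ≠ 0) :
    ∃ a b : ℝ, Ev (a : ℂ) (b : ℂ) h ≠ 0 := by
  obtain ⟨nn, hn⟩ : ∃ nn, h.coeff nn ≠ 0 := by
    by_contra hcon
    push_neg at hcon
    exact hh (Polynomial.ext fun nn => by simp [hcon])
  obtain ⟨a, ha⟩ := exists_real_eval_ne (h.coeff nn) hn
  have h' : (h.map (Polynomial.evalRingHom (a : ℂ))) ≠ 0 := fun h0 => by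
    have := Polynomial.coeff_map (Polynomial.evalRingHom (a : ℂ)) nn (p := h)
    rw [h0] at this
    exact ha (by simpa using this.symm)
  obtain ⟨b, hb⟩ := exists_real_eval_ne _ h'
  exact ⟨a, b, by simpa [Ev] using hb⟩

/-- Given a polynomial in matrix-tuple entry variables which is nonzero at some complex
point, it is nonzero at a point coming from a tuple of hermitian matrices. -/
lemma exists_hermitian_point {g k : ℕ} (q : MvPolynomial (Fin g × Fin k × Fin k) ℂ)
    (x₀ : Fin g × Fin k × Fin k → ℂ) (hq : MvPolynomial.eval x₀ q ≠ 0) :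
    ∃ B' : Fin g → Matrix (Fin k) (Fin k) ℂ, (∀ i, (B' i).IsHermitian) ∧
      MvPolynomial.eval (fun v => B' v.1 v.2.1 v.2.2) q ≠ 0 := by
  classical
  set sub : Fin g × Fin k × Fin k → R2 :=
    fun v => e2 (x₀ v) * zR + e2 (starRingEnd ℂ (x₀ (v.1, v.2.2, v.2.1))) * wR with hsub
  set ρ : MvPolynomial (Fin g × Fin k × Fin k) ℂ →+* R2 := MvPolynomial.eval₂Hom e2 sub with hρ
  have hEv : ∀ (a b : ℂ), (Ev a b) (ρ q) =
      MvPolynomial.eval (fun v => (a + Complex.I * b) * x₀ v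
        + (a - Complex.I * b) * (starRingEnd ℂ (x₀ (v.1, v.2.2, v.2.1)))) q := by
    intro a b
    rw [hρ, show ((Ev a b) ((MvPolynomial.eval₂Hom e2 sub) q)
        = ((Ev a b).comp (MvPolynomial.eval₂Hom e2 sub)) q) from rfl,
      MvPolynomial.comp_eval₂Hom]
    rw [MvPolynomial.eval, MvPolynomial.eval₂Hom_congr ?_ ?_ rfl]
    · ext c <;> simp
    · funext v
      simp [hsub, mul_comm]
  have h1 : (1/2 : ℂ) + Complex.I * (-Complex.I/2) = 1 := by
    linear_combination (-1/2 : ℂ) * Complex.I_sq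
  have h2 : (1/2 : ℂ) - Complex.I * (-Complex.I/2) = 0 := by
    linear_combination (1/2 : ℂ) * Complex.I_sq
  have hρq : ρ q ≠ 0 := by
    intro h0
    have heq := hEv (1/2 : ℂ) (-Complex.I/2)
    rw [h0, map_zero, h1, h2] at heq
    apply hq
    rw [show x₀ = fun v => (1:ℂ) * x₀ v
      + 0 * (starRingEnd ℂ (x₀ (v.1, v.2.2, v.2.1))) from by funext v; ring]
    exact heq.symm
  obtain ⟨a, b, hab⟩ := exists_real_point (ρ q) hρq
  set z : ℂ := (a : ℂ) + Complex.I * b with hz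
  have hzc : starRingEnd ℂ z = (a : ℂ) - Complex.I * b := by
    simp [hz, Complex.conj_ofReal]
    ring
  refine ⟨fun i => Matrix.of fun α β => z * x₀ (i, α, β)
      + (starRingEnd ℂ z) * (starRingEnd ℂ (x₀ (i, β, α))), fun i => ?_, ?_⟩
  · ext α β
    show star ((Matrix.of fun α β => z * x₀ (i, α, β)
      + (starRingEnd ℂ z) * (starRingEnd ℂ (x₀ (i, β, α)))) β α) = _
    simp only [Matrix.of_apply, star_add, star_mul', Complex.star_def, Complex.conj_conj]
    ring
  · have hEv' := hEv (a : ℂ) (b : ℂ)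
    have : (Ev (a:ℂ) (b:ℂ)) (ρ q) ≠ 0 := hab
    rw [hEv'] at this
    rw [show (fun v : Fin g × Fin k × Fin k =>
        (Matrix.of fun α β => z * x₀ (v.1, α, β)
          + (starRingEnd ℂ z) * (starRingEnd ℂ (x₀ (v.1, β, α)))) v.2.1 v.2.2)
      = fun v => ((a:ℂ) + Complex.I * b) * x₀ v
        + ((a:ℂ) - Complex.I * b) * (starRingEnd ℂ (x₀ (v.1, v.2.2, v.2.1))) from by
        funext v; simp [hz, hzc]; left; ring]
    exact this


variable {n : Type*} [Fintype n] [DecidableEq n]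

lemma det_one_sub_smul_conj {S : Type*} [CommRing S] (s : S) (U T V : Matrix n n S)
    (hUV : U * V = 1) (hVU : V * U = 1) :
    Matrix.det (1 - s • (U * T * V)) = Matrix.det (1 - s • T) := by
  have key : 1 - s • (U * T * V) = U * (1 - s • T) * V := by
    rw [Matrix.mul_sub, Matrix.sub_mul, Matrix.mul_one, hUV]
    congr 1
    rw [Matrix.mul_smul, Matrix.smul_mul]
  rw [key, Matrix.det_mul, Matrix.det_mul, mul_comm, ← mul_assoc, ← Matrix.det_mul, hVU]
  simp

lemma natDegree_det_one_sub_X_smul (N : Matrix n n ℂ) (hN : N.IsHermitian) :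
    (Matrix.det ((1 : Matrix n n (Polynomial ℂ))
      - (Polynomial.X : Polynomial ℂ) • N.map Polynomial.C)).natDegree = N.rank := by
  set μ : n → ℝ := hN.eigenvalues with hμ
  set U : Matrix n n ℂ := (hN.eigenvectorUnitary : Matrix n n ℂ) with hU
  have hUV : U * star U = 1 := (Matrix.mem_unitaryGroup_iff).mp hN.eigenvectorUnitary.2
  have hVU : star U * U = 1 := (Matrix.mem_unitaryGroup_iff').mp hN.eigenvectorUnitary.2
  have hspec : N = U * Matrix.diagonal (RCLike.ofReal ∘ μ) * star U := hN.spectral_theorem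
  have hmap : N.map Polynomial.C = (U.map Polynomial.C)
      * (Matrix.diagonal (RCLike.ofReal ∘ μ)).map Polynomial.C * ((star U).map Polynomial.C) := by
    conv_lhs => rw [hspec]
    rw [show ∀ (X Y : Matrix n n ℂ), (X * Y).map (Polynomial.C : ℂ →+* ℂ[X])
      = X.map Polynomial.C * Y.map Polynomial.C from fun X Y => Matrix.map_mul]
    rw [show ∀ (X Y : Matrix n n ℂ), (X * Y).map (Polynomial.C : ℂ →+* ℂ[X])
      = X.map Polynomial.C * Y.map Polynomial.C from fun X Y => Matrix.map_mul]
  have hUV' : U.map Polynomial.C * (star U).map Polynomial.C = 1 := by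
    rw [← Matrix.map_mul, hUV]; simp [Matrix.map_one]
  have hVU' : (star U).map Polynomial.C * U.map Polynomial.C = 1 := by
    rw [← Matrix.map_mul, hVU]; simp [Matrix.map_one]
  rw [hmap, det_one_sub_smul_conj _ _ _ _ hUV' hVU']
  have hdiag : (1 : Matrix n n (Polynomial ℂ))
      - (Polynomial.X : Polynomial ℂ) • (Matrix.diagonal (RCLike.ofReal ∘ μ)).map Polynomial.C
      = Matrix.diagonal (fun j => 1 - Polynomial.X * Polynomial.C (μ j : ℂ)) := by
    rw [Matrix.diagonal_map (by simp), ← Matrix.diagonal_one, ← Matrix.diagonal_smul,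
      Matrix.diagonal_sub]
    congr 1
  rw [hdiag, Matrix.det_diagonal]
  have hne : ∀ j, (1 : Polynomial ℂ) - Polynomial.X * Polynomial.C (μ j : ℂ) ≠ 0 := by
    intro j h0
    have := congrArg (Polynomial.eval 0) h0
    simp at this
  rw [Polynomial.natDegree_prod _ _ (fun j _ => hne j)]
  have hdeg : ∀ j, ((1 : Polynomial ℂ) - Polynomial.X * Polynomial.C (μ j : ℂ)).natDegree
      = if μ j = 0 then 0 else 1 := by
    intro j
    by_cases h : μ j = 0
    · simp [h]
    · rw [if_neg h, show (1 : Polynomial ℂ) - Polynomial.X * Polynomial.C (μ j : ℂ)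
        = Polynomial.C (-(μ j : ℂ)) * Polynomial.X + Polynomial.C 1 from by rw [map_neg, Polynomial.C_1]; ring]
      exact Polynomial.natDegree_linear (by simpa using h)
  rw [Finset.sum_congr rfl (fun j _ => hdeg j)]
  rw [hN.rank_eq_card_non_zero_eigs, Fintype.card_subtype]
  rw [Finset.card_filter]
  apply Finset.sum_congr rfl
  intro j _
  by_cases h : μ j = 0 <;> simp [h, hμ]

lemma isHermitian_sum_kronecker {g δ k : ℕ} (A : Fin g → Matrix (Fin δ) (Fin δ) ℂ)
    (hA : ∀ i, (A i).IsHermitian) (B : Fin g → Matrix (Fin k) (Fin k) ℂ)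
    (hB : ∀ i, (B i).IsHermitian) : (∑ i, A i ⊗ₖ B i).IsHermitian := by
  rw [Matrix.IsHermitian, Matrix.conjTranspose_sum]
  apply Finset.sum_congr rfl
  intro i _
  ext ⟨a1, a2⟩ ⟨b1, b2⟩
  simp only [Matrix.conjTranspose_apply, Matrix.kroneckerMap_apply, star_mul']
  rw [← Matrix.conjTranspose_apply (A i), ← Matrix.conjTranspose_apply (B i), (hA i), (hB i)]


variable {g δ k : ℕ}

lemma psi_det (A : Fin g → Matrix (Fin δ) (Fin δ) ℂ) (B : Fin g → Matrix (Fin k) (Fin k) ℂ) :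
    ψ (fun v => B v.1 v.2.1 v.2.2)
      (Matrix.det ((1 : Matrix (Fin δ × Fin k) (Fin δ × Fin k)
          (MvPolynomial (Fin g × Fin k × Fin k) ℂ)) -
        ∑ i, ((A i).map MvPolynomial.C ⊗ₖ Matrix.of fun α β => MvPolynomial.X (i, α, β))))
    = Matrix.det ((1 : Matrix (Fin δ × Fin k) (Fin δ × Fin k) (Polynomial ℂ)) -
        (Polynomial.X : Polynomial ℂ) • (∑ i, A i ⊗ₖ B i).map Polynomial.C) := by
  rw [RingHom.map_det]
  congr 1
  apply Matrix.ext
  intro a b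
  simp only [RingHom.mapMatrix_apply, Matrix.map_apply, Matrix.sub_apply, Matrix.one_apply,
    Matrix.sum_apply, Matrix.kroneckerMap_apply, Matrix.of_apply, Matrix.smul_apply, smul_eq_mul,
    map_sub, map_sum, _root_.map_mul]
  congr 1
  · split_ifs <;> simp
  · rw [Finset.mul_sum]
    refine Finset.sum_congr rfl fun i _ => ?_
    have h1 : ψ (fun v : Fin g × Fin k × Fin k => B v.1 v.2.1 v.2.2)
        (MvPolynomial.C (A i a.1 b.1)) = Polynomial.C (A i a.1 b.1) := by simp [ψ]
    have h2 : ψ (fun v : Fin g × Fin k × Fin k => B v.1 v.2.1 v.2.2)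
        (MvPolynomial.X (i, a.2, b.2)) = Polynomial.C (B i a.2 b.2) * Polynomial.X := by simp [ψ]
    rw [h1, h2]
    ring

lemma eval_q2 {r : ℕ} (A : Fin g → Matrix (Fin δ) (Fin δ) ℂ)
    (B : Fin g → Matrix (Fin k) (Fin k) ℂ)
    (P : Matrix (Fin r) (Fin δ × Fin k) ℂ) (Q : Matrix (Fin δ × Fin k) (Fin r) ℂ) :
    MvPolynomial.eval (fun v : Fin g × Fin k × Fin k => B v.1 v.2.1 v.2.2)
      (Matrix.det ((P.map (MvPolynomial.C : ℂ →+* MvPolynomial (Fin g × Fin k × Fin k) ℂ) : Matrix (Fin r) (Fin δ × Fin k) (MvPolynomial (Fin g × Fin k × Fin k) ℂ)) *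
        (∑ i, ((A i).map MvPolynomial.C ⊗ₖ Matrix.of fun α β => MvPolynomial.X (i, α, β)) : Matrix (Fin δ × Fin k) (Fin δ × Fin k) (MvPolynomial (Fin g × Fin k × Fin k) ℂ)) *
        (Q.map MvPolynomial.C)))
    = Matrix.det (P * (∑ i, A i ⊗ₖ B i) * Q) := by
  rw [show (MvPolynomial.eval (fun v : Fin g × Fin k × Fin k => B v.1 v.2.1 v.2.2))
    = ((MvPolynomial.eval (fun v : Fin g × Fin k × Fin k => B v.1 v.2.1 v.2.2) :
        MvPolynomial (Fin g × Fin k × Fin k) ℂ →+* ℂ)) from rfl, RingHom.map_det]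
  congr 1
  erw [RingHom.mapMatrix_apply, Matrix.map_mul, Matrix.map_mul]
  congr 1
  · congr 1
    · apply Matrix.ext
      intro a b
      simp [Matrix.map_apply]
    · apply Matrix.ext
      intro a b
      simp [Matrix.map_apply, Matrix.sum_apply, Matrix.kroneckerMap_apply]
  · apply Matrix.ext
    intro a b
    simp [Matrix.map_apply]

end PencilProof

end

/-- The total degree of `det(I - ∑ A_i ⊗ 𝒴^i)`, as a polynomial in the `g k²` commuting
entry variables of the generic `k × k` matrices `𝒴^i`, equals the maximal rank of
`∑ A_i ⊗ B_i` over all tuples `B` of `k × k` complex matrices. -/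
theorem totalDegree_det_pencil_eq_max_rank (g δ k : ℕ)
    (A : Fin g → Matrix (Fin δ) (Fin δ) ℂ) (hA : ∀ i, (A i).IsHermitian) :
    IsGreatest
      {r : ℕ | ∃ B : Fin g → Matrix (Fin k) (Fin k) ℂ, r = (∑ i, A i ⊗ₖ B i).rank}
      (Matrix.det
        ((1 : Matrix (Fin δ × Fin k) (Fin δ × Fin k)
            (MvPolynomial (Fin g × Fin k × Fin k) ℂ)) -
          ∑ i, ((A i).map MvPolynomial.C ⊗ₖ
            Matrix.of fun α β => MvPolynomial.X (i, α, β)))).totalDegree := by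
  classical
  set p : MvPolynomial (Fin g × Fin k × Fin k) ℂ :=
    Matrix.det ((1 : Matrix (Fin δ × Fin k) (Fin δ × Fin k)
        (MvPolynomial (Fin g × Fin k × Fin k) ℂ)) -
      ∑ i, ((A i).map MvPolynomial.C ⊗ₖ Matrix.of fun α β => MvPolynomial.X (i, α, β)))
    with hpdef
  have hup : ∀ B : Fin g → Matrix (Fin k) (Fin k) ℂ,
      (∑ i, A i ⊗ₖ B i).rank ≤ p.totalDegree := by
    intro B
    obtain ⟨P, Q, hPQ⟩ := PencilProof.exists_pq (∑ i, A i ⊗ₖ B i)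
    have h0 : MvPolynomial.eval (fun v : Fin g × Fin k × Fin k => B v.1 v.2.1 v.2.2)
        (Matrix.det ((P.map (MvPolynomial.C : ℂ →+* MvPolynomial (Fin g × Fin k × Fin k) ℂ) : Matrix (Fin _) (Fin δ × Fin k) (MvPolynomial (Fin g × Fin k × Fin k) ℂ)) *
          (∑ i, ((A i).map MvPolynomial.C ⊗ₖ
            Matrix.of fun α β => MvPolynomial.X (i, α, β)) : Matrix (Fin δ × Fin k) (Fin δ × Fin k) (MvPolynomial (Fin g × Fin k × Fin k) ℂ)) *
          (Q.map MvPolynomial.C))) ≠ 0 := by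
      rw [PencilProof.eval_q2, hPQ]
      simp
    obtain ⟨B', hB'h, hB'⟩ := PencilProof.exists_hermitian_point _ _ h0
    rw [PencilProof.eval_q2] at hB'
    have hr := PencilProof.rank_ge_of_pq (∑ i, A i ⊗ₖ B' i) P Q hB'
    have hherm := PencilProof.isHermitian_sum_kronecker A hA B' hB'h
    have hdeg : (∑ i, A i ⊗ₖ B' i).rank
        = (PencilProof.ψ (fun v => B' v.1 v.2.1 v.2.2) p).natDegree := by
      rw [hpdef, PencilProof.psi_det A B',
        PencilProof.natDegree_det_one_sub_X_smul _ hherm]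
    calc (∑ i, A i ⊗ₖ B i).rank ≤ (∑ i, A i ⊗ₖ B' i).rank := hr
      _ = _ := hdeg
      _ ≤ p.totalDegree := PencilProof.natDegree_ψ_le _ p
  constructor
  · -- membership: the total degree is attained as a rank
    have hp0 : p ≠ 0 := by
      intro h0
      have hz : ∀ i : Fin g, A i ⊗ₖ (0 : Matrix (Fin k) (Fin k) ℂ) = 0 := by
        intro i
        apply Matrix.ext
        intro a b
        simp
      have h1 := PencilProof.psi_det A (fun _ => (0 : Matrix (Fin k) (Fin k) ℂ))
      rw [← hpdef, h0, map_zero] at h1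
      simp [hz] at h1
    have hc := PencilProof.homComp_top_ne_zero p hp0
    obtain ⟨x₀, hx₀⟩ : ∃ x₀, MvPolynomial.eval x₀
        (MvPolynomial.homogeneousComponent p.totalDegree p) ≠ 0 := by
      by_contra hcon
      push_neg at hcon
      exact hc (MvPolynomial.funext fun x => by rw [hcon x, map_zero])
    obtain ⟨B', hB'h, hB'⟩ := PencilProof.exists_hermitian_point _ x₀ hx₀
    refine ⟨B', ?_⟩
    have hherm := PencilProof.isHermitian_sum_kronecker A hA B' hB'h
    have hcoeff : (PencilProof.ψ (fun v => B' v.1 v.2.1 v.2.2) p).coeff p.totalDegree ≠ 0 := by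
      rw [PencilProof.coeff_ψ]
      exact hB'
    have hge := Polynomial.le_natDegree_of_ne_zero hcoeff
    have hle := PencilProof.natDegree_ψ_le (fun v => B' v.1 v.2.1 v.2.2) p
    have hnd : (PencilProof.ψ (fun v => B' v.1 v.2.1 v.2.2) p).natDegree = p.totalDegree :=
      le_antisymm hle hge
    have hdeg : (∑ i, A i ⊗ₖ B' i).rank
        = (PencilProof.ψ (fun v => B' v.1 v.2.1 v.2.2) p).natDegree := by
      rw [hpdef, PencilProof.psi_det A B',
        PencilProof.natDegree_det_one_sub_X_smul _ hherm]
    rw [hdeg, hnd]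
  · rintro r ⟨B, rfl⟩
    exact hup B
end
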